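/- Fix positive integers n, T, k, r, m. For each i = 1,…,n let y_i ∈ ℝ^T, let x_i be a T×k real matrix, Δb_i a T×m real matrix, Ω_{bi} an invertible m×m real matrix, Ω_{bui} ∈ ℝ^m, and d_i ∈ ℝ^k. Let F be a T×r real matrix with F'F invertible, set M_F = I_T − F(F'F)^{-1}F', and suppose S = ∑_{i=1}^n x_i'M_F x_i is invertible. Define θ_i = (1/T)·x_i'M_F Δb_i Ω_{bi}^{-1}Ω_{bui} + d_i, the bias-corrected estimator β_BC = S^{-1}∑_i x_i'M_F y_i − (1/T)·((1/(nT²))·S)^{-1}·((1/n)∑_i θ_i), the corrected data y_i⁺ = y_i − Δb_i Ω_{bi}^{-1}Ω_{bui}, and the fully-modified estimator β_FM = S^{-1}∑_i (x_i'M_F y_i⁺ − T·d_i). Then β_BC = β_FM. -/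

import Mathlib

open Matrix BigOperators

theorem stmt_0
    (n T k r m : ℕ) (hn : 0 < n) (hT : 0 < T)
    (y : Fin n → Matrix (Fin T) (Fin 1) ℝ)
    (x : Fin n → Matrix (Fin T) (Fin k) ℝ)
    (Δb : Fin n → Matrix (Fin T) (Fin m) ℝ)
    (Ωb : Fin n → Matrix (Fin m) (Fin m) ℝ)
    (hΩb : ∀ i, IsUnit (Ωb i).det)
    (Ωbu : Fin n → Matrix (Fin m) (Fin 1) ℝ)
    (d : Fin n → Matrix (Fin k) (Fin 1) ℝ)
    (F : Matrix (Fin T) (Fin r) ℝ)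
    (hF : IsUnit (Fᵀ * F).det)
    (MF : Matrix (Fin T) (Fin T) ℝ)
    (hMF : MF = 1 - F * (Fᵀ * F)⁻¹ * Fᵀ)
    (S : Matrix (Fin k) (Fin k) ℝ)
    (hS : S = ∑ i, (x i)ᵀ * MF * x i)
    (hSinv : IsUnit S.det)
    (θ : Fin n → Matrix (Fin k) (Fin 1) ℝ)
    (hθ : ∀ i, θ i = (1 / (T : ℝ)) • ((x i)ᵀ * MF * Δb i * (Ωb i)⁻¹ * Ωbu i) + d i)
    (βBC : Matrix (Fin k) (Fin 1) ℝ)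
    (hβBC : βBC = S⁻¹ * (∑ i, (x i)ᵀ * MF * y i)
      - (1 / (T : ℝ)) • (((1 / ((n : ℝ) * (T : ℝ) ^ 2)) • S)⁻¹ * ((1 / (n : ℝ)) • ∑ i, θ i)))
    (yplus : Fin n → Matrix (Fin T) (Fin 1) ℝ)
    (hyplus : ∀ i, yplus i = y i - Δb i * (Ωb i)⁻¹ * Ωbu i)
    (βFM : Matrix (Fin k) (Fin 1) ℝ)
    (hβFM : βFM = S⁻¹ * (∑ i, ((x i)ᵀ * MF * yplus i - (T : ℝ) • d i))) :
    βBC = βFM := by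
  have hn' : ((n : ℝ)) ≠ 0 := Nat.cast_ne_zero.mpr hn.ne'
  have hT' : ((T : ℝ)) ≠ 0 := Nat.cast_ne_zero.mpr hT.ne'
  have hc : (1 / ((n : ℝ) * (T : ℝ) ^ 2)) ≠ 0 := by positivity
  haveI : Invertible (1 / ((n : ℝ) * (T : ℝ) ^ 2)) := invertibleOfNonzero hc
  have key : ((1 / ((n : ℝ) * (T : ℝ) ^ 2)) • S)⁻¹ = ((n : ℝ) * (T : ℝ) ^ 2) • S⁻¹ := by
    apply Matrix.inv_eq_left_inv
    rw [Matrix.smul_mul, Matrix.mul_smul, Matrix.nonsing_inv_mul _ hSinv, smul_smul]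
    rw [show ((n : ℝ) * (T : ℝ) ^ 2) * (1 / ((n : ℝ) * (T : ℝ) ^ 2)) = 1 by field_simp]
    simp
  have hsum : (∑ i, (x i)ᵀ * MF * y i) - (T:ℝ) • ∑ i, θ i
      = ∑ i, ((x i)ᵀ * MF * yplus i - (T:ℝ) • d i) := by
    rw [Finset.smul_sum, ← Finset.sum_sub_distrib]
    refine Finset.sum_congr rfl fun i _ => ?_
    rw [hθ i, hyplus i, smul_add, smul_smul]
    rw [show (T:ℝ) * (1 / (T:ℝ)) = 1 by field_simp]
    rw [one_smul, Matrix.mul_sub]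
    simp only [Matrix.mul_assoc]
    abel
  rw [hβBC, hβFM, key, Matrix.smul_mul, Matrix.mul_smul, smul_smul, smul_smul]
  rw [show (1 / (T:ℝ)) * ((n:ℝ) * (T:ℝ)^2) * (1 / (n:ℝ)) = (T:ℝ) by field_simp]
  rw [← Matrix.mul_smul, ← Matrix.mul_sub, hsum]
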